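/- Let f ∈ ℂ[x_1,…,x_N] be quasihomogeneous with respect to a weight system (v_1,…,v_N,d) and nondegenerate, and assume that no exponent vector α in the support of f has total degree 2 (i.e. f contains no summands of the form x_i x_j or x_i^2). Then f is invertible if and only if there exist a map κ: {1,…,N} → {1,…,N}, integers a_j ≥ 2 and coefficients b_j ∈ ℂ^* such that f = Σ_{j=1}^N b_j x_j^{a_j} x_{κ(j)} (where a fixed point κ(j) = j contributes the term b_j x_j^{a_j+1}). -/

import Mathlib

open MvPolynomial

/-- A polynomial is nondegenerate if the only common zero of all its partial
derivatives is the origin. -/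
def IsNondegenerate {N : ℕ} (f : MvPolynomial (Fin N) ℂ) : Prop :=
  {x : Fin N → ℂ | ∀ i, MvPolynomial.eval x (MvPolynomial.pderiv i f) = 0} = {0}

/-- A polynomial in `N` variables is invertible if it is a sum of `N` monomials with
nonzero coefficients whose exponent matrix is invertible over `ℚ`. -/
def IsInvertiblePoly {N : ℕ} (f : MvPolynomial (Fin N) ℂ) : Prop :=
  ∃ (cc : Fin N → ℂ) (E : Matrix (Fin N) (Fin N) ℕ),
    (∀ i, cc i ≠ 0) ∧
    f = ∑ i, C (cc i) * ∏ j, X j ^ E i j ∧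
    (E.map (fun n : ℕ => (n : ℚ))).det ≠ 0

/-- `C b * X j ^ a * X k` is the monomial with exponent vector `single j a + single k 1`. -/
lemma loop_term_eq {N : ℕ} (j κj : Fin N) (a : ℕ) (b : ℂ) :
    C b * (X j ^ a * X κj) = monomial (Finsupp.single j a + Finsupp.single κj 1) b := by
  rw [show (X κj : MvPolynomial (Fin N) ℂ) = X κj ^ 1 from (pow_one _).symm,
    X_pow_eq_monomial, X_pow_eq_monomial, monomial_mul, C_mul_monomial, mul_one, mul_one]

/-- A full product of powers of the variables is a monomial. -/
lemma prod_X_pow_all {N : ℕ} (g : Fin N → ℕ) :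
    (∏ j, (X j : MvPolynomial (Fin N) ℂ) ^ g j) =
      monomial (Finsupp.equivFunOnFinite.symm g) 1 := by
  rw [← prod_X_pow_eq_monomial]
  symm
  apply Finset.prod_subset (Finset.subset_univ _)
  intro x _ hx
  simp only [Finsupp.mem_support_iff, not_not] at hx
  simp [hx]

/-- The variable index carrying the high exponent in a monomial of the shape
`x_i^a x_j` with `a ≥ 2` is uniquely determined. -/
lemma shape_inj {N : ℕ} {i i' j j' : Fin N} {a a' : ℕ} (ha : 2 ≤ a) (ha' : 2 ≤ a')
    (h : Finsupp.single i a + Finsupp.single j 1 = Finsupp.single i' a' + Finsupp.single j' 1) :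
    i = i' := by
  by_contra hii
  have h1 := DFunLike.congr_fun h i
  have h2 := DFunLike.congr_fun h i'
  simp only [Finsupp.add_apply, Finsupp.single_apply] at h1 h2
  split_ifs at h1 h2 <;> omega

/-- For a nondegenerate quasihomogeneous polynomial with no quadratic monomials, every
variable `x_i` occurs in a monomial of the shape `x_i^a x_j` with `a ≥ 2` (possibly
`j = i`, giving a pure power). -/
lemma good_monomial {N : ℕ} (v : Fin N → ℕ) (d : ℕ)
    (hvd : ∀ i, v i < d)
    (f : MvPolynomial (Fin N) ℂ)
    (hqh : ∀ m ∈ f.support, ∑ i, m i * v i = d)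
    (hnd : IsNondegenerate f)
    (hno2 : ∀ m ∈ f.support, (∑ i, m i) ≠ 2) (i : Fin N) :
    ∃ a j, 2 ≤ a ∧ Finsupp.single i a + Finsupp.single j 1 ∈ f.support := by
  by_contra hcon
  push_neg at hcon
  have hshape : ∀ m ∈ f.support, ∀ (a : ℕ) (j : Fin N),
      m ≠ Finsupp.single i a + Finsupp.single j 1 := by
    intro m hm a j hmeq
    have hdeg : (∑ k, m k) = a + (if j = i then 1 else 0) + (if j = i then 0 else 1) := by
      subst hmeq
      rw [Finset.sum_congr rfl (fun k _ => Finsupp.add_apply _ _ _), Finset.sum_add_distrib]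
      by_cases hji : j = i <;>
        simp [Finsupp.single_apply, Finset.sum_ite_eq', hji]
    have hdeg' : (∑ k, m k) = a + 1 := by rw [hdeg]; split_ifs <;> ring
    have h2 := hno2 m hm
    rw [hdeg'] at h2
    have ha0 : a ≠ 0 := by
      rintro rfl
      have hq := hqh m hm
      have : m = Finsupp.single j 1 := by rw [hmeq]; simp
      subst this
      have : (∑ k, (Finsupp.single j 1) k * v k) = v j := by
        simp [Finsupp.single_apply, ite_mul, Finset.sum_ite_eq']
      rw [this] at hq
      exact absurd hq (hvd j).ne
    have ha2 : 2 ≤ a := by omega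
    exact hcon a j ha2 (hmeq ▸ hm)
  have hzero : ∀ j, eval (Pi.single i (1:ℂ)) (pderiv j f) = 0 := by
    intro j
    conv_lhs => rw [f.as_sum]
    rw [map_sum, map_sum]
    apply Finset.sum_eq_zero
    intro m hm
    rw [pderiv_monomial, eval_monomial]
    by_cases hmj : m j = 0
    · simp [hmj]
    · by_cases hsub : ∀ k, k ≠ i → ((m - Finsupp.single j 1 : Fin N →₀ ℕ)) k = 0
      · exfalso
        have hle : Finsupp.single j 1 ≤ m := by
          rw [Finsupp.single_le_iff]; omega
        apply hshape m hm (((m - Finsupp.single j 1 : Fin N →₀ ℕ)) i) j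
        conv_lhs => rw [← tsub_add_cancel_of_le hle]
        congr 1
        ext k
        by_cases hk : k = i
        · subst hk; simp [Finsupp.single_apply]
        · simp [Finsupp.single_apply, Ne.symm hk, hsub k hk]
      · push_neg at hsub
        obtain ⟨k, hki, hk⟩ := hsub
        apply mul_eq_zero_of_right
        rw [Finsupp.prod]
        apply Finset.prod_eq_zero (Finsupp.mem_support_iff.mpr hk)
        rw [Pi.single_apply, if_neg hki]
        exact zero_pow hk
  have hmem : (Pi.single i (1:ℂ)) ∈ {x : Fin N → ℂ | ∀ j, eval x (pderiv j f) = 0} := hzero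
  rw [hnd] at hmem
  have : (Pi.single i (1:ℂ) : Fin N → ℂ) i = 0 := by rw [Set.mem_singleton_iff.mp hmem]; rfl
  simp at this

/-- A nondegenerate quasihomogeneous polynomial without quadratic monomials is
invertible if and only if it is of the form `Σ_j b_j x_j^{a_j} x_{κ(j)}` with
`a_j ≥ 2` and `b_j ∈ ℂ^*` for some map `κ`. -/
theorem invertible_iff_loop_form (N : ℕ) (hN : 1 ≤ N) (v : Fin N → ℕ) (d : ℕ)
    (hv : ∀ i, 0 < v i) (hvd : ∀ i, v i < d)
    (f : MvPolynomial (Fin N) ℂ)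
    (hqh : ∀ m ∈ f.support, ∑ i, m i * v i = d)
    (hnd : IsNondegenerate f)
    (hno2 : ∀ m ∈ f.support, (∑ i, m i) ≠ 2) :
    IsInvertiblePoly f ↔
      ∃ (κ : Fin N → Fin N) (a : Fin N → ℕ) (b : Fin N → ℂ),
        (∀ j, 2 ≤ a j) ∧ (∀ j, b j ≠ 0) ∧
        f = ∑ j, C (b j) * (X j ^ a j * X (κ j)) := by
  constructor
  · rintro ⟨cc, E, hcc, hfeq, hdet⟩
    -- the support of f has at most N elements
    have hsup_sub : f.support ⊆
        Finset.univ.image (fun i => Finsupp.equivFunOnFinite.symm (E i)) := by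
      rw [hfeq]
      refine Finset.Subset.trans support_sum ?_
      intro m hm
      rw [Finset.mem_biUnion] at hm
      obtain ⟨i, _, hmi⟩ := hm
      rw [prod_X_pow_all, C_mul_monomial, mul_one] at hmi
      have := support_monomial_subset hmi
      rw [Finset.mem_singleton] at this
      subst this
      exact Finset.mem_image_of_mem _ (Finset.mem_univ i)
    have hcard : f.support.card ≤ N := by
      calc f.support.card ≤ _ := Finset.card_le_card hsup_sub
        _ ≤ Finset.univ.card := Finset.card_image_le
        _ = N := by simp
    -- choose for each i a good monomial
    choose a κ hak hmemg using fun i => good_monomial v d hvd f hqh hnd hno2 i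
    set g : Fin N → (Fin N →₀ ℕ) :=
      fun i => Finsupp.single i (a i) + Finsupp.single (κ i) 1 with hg
    have hginj : Function.Injective g := fun i i' h => shape_inj (hak i) (hak i') h
    have himg : Finset.univ.image g ⊆ f.support := by
      intro m hm
      rw [Finset.mem_image] at hm
      obtain ⟨i, _, rfl⟩ := hm
      exact hmemg i
    have heq : Finset.univ.image g = f.support := by
      apply Finset.eq_of_subset_of_card_le himg
      rwa [Finset.card_image_of_injective _ hginj, Finset.card_univ, Fintype.card_fin]
    refine ⟨κ, a, fun j => coeff (g j) f, hak, ?_, ?_⟩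
    · intro j
      exact mem_support_iff.mp (hmemg j)
    · conv_lhs => rw [f.as_sum]
      rw [← heq, Finset.sum_image (fun i _ i' _ h => hginj h)]
      exact Finset.sum_congr rfl fun j _ => (loop_term_eq j (κ j) (a j) (coeff (g j) f)).symm
  · rintro ⟨κ, a, b, ha, hb, hfeq⟩
    refine ⟨b, Matrix.of (fun i j => (if j = i then a i else 0) + (if j = κ i then 1 else 0)),
      hb, ?_, ?_⟩
    · rw [hfeq]
      refine Finset.sum_congr rfl fun i _ => ?_
      rw [prod_X_pow_all, loop_term_eq, C_mul_monomial, mul_one]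
      refine congrArg (fun s : Fin N →₀ ℕ => (monomial s (b i) : MvPolynomial (Fin N) ℂ)) ?_
      ext k
      simp only [Finsupp.add_apply, Finsupp.single_apply,
        Finsupp.coe_equivFunOnFinite_symm, Matrix.of_apply]
      by_cases h1 : k = i <;> by_cases h2 : k = κ i <;>
        simp [h1, h2, Ne.symm, eq_comm]
    · apply det_ne_zero_of_sum_row_lt_diag
      intro k
      have hrow : ∀ j ∈ Finset.univ.erase k,
          ‖((((if j = k then a k else 0) + (if j = κ k then 1 else 0) : ℕ)) : ℚ)‖ =
          (if j = κ k then 1 else 0 : ℝ) := by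
        intro j hj
        rw [if_neg (Finset.ne_of_mem_erase hj)]
        split_ifs <;> simp
      calc ∑ j ∈ Finset.univ.erase k,
            ‖((Matrix.of (fun i j => (if j = i then a i else 0) + (if j = κ i then 1 else 0)) :
          Matrix (Fin N) (Fin N) ℕ).map (fun n : ℕ => (n : ℚ)) k j)‖
          = ∑ j ∈ Finset.univ.erase k, (if j = κ k then 1 else 0 : ℝ) :=
            Finset.sum_congr rfl hrow
        _ ≤ 1 := by
            rw [Finset.sum_ite_eq' _ (κ k) (fun _ => (1:ℝ))]
            split_ifs <;> norm_num
        _ < 2 := by norm_num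
        _ ≤ _ := by
            have hc : ((((if k = k then a k else 0) + (if k = κ k then 1 else 0) : ℕ)) : ℚ) =
                ((a k + (if k = κ k then 1 else 0) : ℕ) : ℚ) := by rw [if_pos rfl]
            show (2:ℝ) ≤ ‖((((if k = k then a k else 0) + (if k = κ k then 1 else 0) : ℕ)) : ℚ)‖
            rw [hc]
            have h2 : (2:ℚ) ≤ (a k : ℚ) := by exact_mod_cast ha k
            have h3 : (2:ℚ) ≤ ((a k + (if k = κ k then 1 else 0) : ℕ) : ℚ) := by
              split_ifs <;> push_cast <;> linarith
            calc (2:ℝ) ≤ ((a k + (if k = κ k then 1 else 0) : ℕ) : ℚ) := by exact_mod_cast h3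
              _ ≤ ‖((a k + (if k = κ k then 1 else 0) : ℕ) : ℚ)‖ := le_abs_self _
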